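/- Let n ≥ 2, let X₁,…,Xₙ, Z₁,…,Zₙ, W₁,…,Wₙ be positive real numbers, and let σ : {1,…,n} → {+1,−1} be a choice of signs taking both values +1 and −1. Set Mᵢ = E(Zᵢ,Wᵢ)·T(Xᵢ) if σ(i)=+1 and Mᵢ = E(Zᵢ,Wᵢ)·T(Xᵢ)⁻¹ if σ(i)=−1. Then the product M₁·M₂·⋯·Mₙ is conjugate in GL₃(ℝ) to a totally positive matrix, i.e. to a 3×3 real matrix all of whose entries, all of whose 2×2 minors, and whose determinant are positive. -/

import Mathlib

open Matrix

/-- The matrix `T(X)` with rows `(0,0,1)`, `(0,-1,-1)`, `(X, 1+X, 1)`. -/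
def Tmat (X : ℝ) : Matrix (Fin 3) (Fin 3) ℝ :=
  !![0, 0, 1; 0, -1, -1; X, 1 + X, 1]

/-- The matrix `E(Z,W)` with rows `(0,0,Z⁻¹)`, `(0,-1,0)`, `(W,0,0)`. -/
noncomputable def Emat (Z W : ℝ) : Matrix (Fin 3) (Fin 3) ℝ :=
  !![0, 0, Z⁻¹; 0, -1, 0; W, 0, 0]

/-- A 3×3 real matrix is totally positive: all entries, all 2×2 minors and the
determinant are positive. -/
def TotallyPositive (P : Matrix (Fin 3) (Fin 3) ℝ) : Prop :=
  (∀ i j : Fin 3, 0 < P i j) ∧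
  (∀ r c : Fin 2 → Fin 3, StrictMono r → StrictMono c → 0 < (P.submatrix r c).det) ∧
  0 < P.det

section Aux

set_option maxHeartbeats 1000000

/-- 2×2 minor of a 3×3 matrix. -/
def m2 (A : Matrix (Fin 3) (Fin 3) ℝ) (i0 i1 j0 j1 : Fin 3) : ℝ :=
  A i0 j0 * A i1 j1 - A i0 j1 * A i1 j0

/-- Explicit form of total positivity. -/
def TP3 (P : Matrix (Fin 3) (Fin 3) ℝ) : Prop :=
  (∀ i j : Fin 3, 0 < P i j) ∧
  0 < m2 P 0 1 0 1 ∧ 0 < m2 P 0 1 0 2 ∧ 0 < m2 P 0 1 1 2 ∧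
  0 < m2 P 0 2 0 1 ∧ 0 < m2 P 0 2 0 2 ∧ 0 < m2 P 0 2 1 2 ∧
  0 < m2 P 1 2 0 1 ∧ 0 < m2 P 1 2 0 2 ∧ 0 < m2 P 1 2 1 2 ∧
  0 < P.det

/-- Totally positive upper-triangular class. -/
def UCl (A : Matrix (Fin 3) (Fin 3) ℝ) : Prop :=
  ∃ a b c d e f : ℝ, 0 < a ∧ 0 < b ∧ 0 < c ∧ 0 < d ∧ 0 < e ∧ 0 < f ∧
    0 < b*e - c*d ∧ A = !![a,b,c; 0,d,e; 0,0,f]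

/-- Totally positive lower-triangular class. -/
def LCl (A : Matrix (Fin 3) (Fin 3) ℝ) : Prop :=
  ∃ a b c d e f : ℝ, 0 < a ∧ 0 < b ∧ 0 < c ∧ 0 < d ∧ 0 < e ∧ 0 < f ∧
    0 < b*e - c*d ∧ A = !![a,0,0; b,c,0; d,e,f]

lemma UCl_mul_UCl {A B : Matrix (Fin 3) (Fin 3) ℝ} (hA : UCl A) (hB : UCl B) :
    UCl (A * B) := by
  obtain ⟨a,b,c,d,e,f,ha,hb,hc,hd,he,hf,hm,rfl⟩ := hA
  obtain ⟨a',b',c',d',e',f',ha',hb',hc',hd',he',hf',hm',rfl⟩ := hB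
  refine ⟨a*a', a*b'+b*d', a*c'+b*e'+c*f', d*d', d*e'+e*f', f*f', ?_,?_,?_,?_,?_,?_,?_,?_⟩
  · positivity
  · positivity
  · positivity
  · positivity
  · positivity
  · positivity
  · nlinarith [mul_pos (mul_pos ha hd) hm', mul_pos (mul_pos (mul_pos ha he) hb') hf',
      mul_pos hm (mul_pos hd' hf')]
  · rw [Matrix.mul_fin_three]
    congr 1 <;> ring_nf

lemma UCl_mul_LCl {A B : Matrix (Fin 3) (Fin 3) ℝ} (hA : UCl A) (hB : LCl B) :
    TP3 (A * B) := by
  obtain ⟨a,b,c,d,e,f,ha,hb,hc,hd,he,hf,hm,rfl⟩ := hA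
  obtain ⟨a',b',c',d',e',f',ha',hb',hc',hd',he',hf',hm',rfl⟩ := hB
  rw [Matrix.mul_fin_three]
  refine ⟨?_, ?_, ?_, ?_, ?_, ?_, ?_, ?_, ?_, ?_, ?_⟩
  · intro i j
    fin_cases i <;> fin_cases j <;> simp <;> positivity
  · simp only [m2]; simp
    nlinarith [mul_pos (mul_pos ha hd) (mul_pos ha' hc'),
      mul_pos (mul_pos ha he) (mul_pos ha' he'), mul_pos hm hm']
  · simp only [m2]; simp
    nlinarith [mul_pos (mul_pos ha he) (mul_pos ha' hf'),
      mul_pos hm (mul_pos hb' hf')]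
  · simp only [m2]; simp
    nlinarith [mul_pos hm (mul_pos hc' hf')]
  · simp only [m2]; simp
    nlinarith [mul_pos (mul_pos ha hf) (mul_pos ha' he'),
      mul_pos (mul_pos hb hf) hm']
  · simp only [m2]; simp
    nlinarith [mul_pos (mul_pos ha hf) (mul_pos ha' hf'),
      mul_pos (mul_pos hb hf) (mul_pos hb' hf')]
  · simp only [m2]; simp
    nlinarith [mul_pos (mul_pos hb hf) (mul_pos hc' hf')]
  · simp only [m2]; simp
    nlinarith [mul_pos (mul_pos hd hf) hm']
  · simp only [m2]; simp
    nlinarith [mul_pos (mul_pos hd hf) (mul_pos hb' hf')]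
  · simp only [m2]; simp
    nlinarith [mul_pos (mul_pos hd hf) (mul_pos hc' hf')]
  · rw [Matrix.det_fin_three]; simp
    nlinarith [mul_pos (mul_pos ha hd) (mul_pos hf (mul_pos ha' (mul_pos hc' hf')))]
lemma TP3_mul_UCl {P A : Matrix (Fin 3) (Fin 3) ℝ} (hP : TP3 P) (hA : UCl A) :
    TP3 (P * A) := by
  obtain ⟨hE, h1, h2, h3, h4, h5, h6, h7, h8, h9, hD⟩ := hP
  obtain ⟨a,b,c,d,e,f,ha,hb,hc,hd,he,hf,hm,rfl⟩ := hA
  simp only [m2] at h1 h2 h3 h4 h5 h6 h7 h8 h9 ⊢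
  have hDA : ((!![a,b,c; 0,d,e; 0,0,f]) : Matrix (Fin 3) (Fin 3) ℝ).det = a*d*f := by
    simp [Matrix.det_fin_three, Matrix.vecHead, Matrix.vecTail]; try ring
  refine ⟨?_, ?_, ?_, ?_, ?_, ?_, ?_, ?_, ?_, ?_, ?_⟩
  · intro i j
    fin_cases i <;> fin_cases j <;> simp [m2, Matrix.mul_apply, Fin.sum_univ_three, Matrix.vecHead, Matrix.vecTail] <;>
      linarith [mul_pos (hE 0 0) ha, mul_pos (hE 0 0) hb, mul_pos (hE 0 0) hc, mul_pos (hE 0 0) hd, mul_pos (hE 0 0) he, mul_pos (hE 0 0) hf, mul_pos (hE 0 1) ha, mul_pos (hE 0 1) hb, mul_pos (hE 0 1) hc, mul_pos (hE 0 1) hd, mul_pos (hE 0 1) he, mul_pos (hE 0 1) hf, mul_pos (hE 0 2) ha, mul_pos (hE 0 2) hb, mul_pos (hE 0 2) hc, mul_pos (hE 0 2) hd, mul_pos (hE 0 2) he, mul_pos (hE 0 2) hf, mul_pos (hE 1 0) ha, mul_pos (hE 1 0) hb, mul_pos (hE 1 0) hc, mul_pos (hE 1 0) hd, mul_pos (hE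 1 0) he, mul_pos (hE 1 0) hf, mul_pos (hE 1 1) ha, mul_pos (hE 1 1) hb, mul_pos (hE 1 1) hc, mul_pos (hE 1 1) hd, mul_pos (hE 1 1) he, mul_pos (hE 1 1) hf, mul_pos (hE 1 2) ha, mul_pos (hE 1 2) hb, mul_pos (hE 1 2) hc, mul_pos (hE 1 2) hd, mul_pos (hE 1 2) he, mul_pos (hE 1 2) hf, mul_pos (hE 2 0) ha, mul_pos (hE 2 0) hb, mul_pos (hE 2 0) hc, mul_pos (hE 2 0) hd, mul_pos (hE 2 0) he, mul_pos (hE 2 0) hf, mul_pos (hE 2 1) ha, mul_pos (hE 2 1) hb, mul_pos (hE 2 1) hc, mul_pos (hE 2 1) hd, mul_pos (hE 2 1) he, mul_pos (hE 2 1) hf, mul_pos (hE 2 2) ha, mul_pos (hE 2 2) hb, mul_pos (hE 2 2) hc, mul_pos (hE 2 2) hd, mul_pos (hE 2 2) he, mul_pos (hE 2 2) hf]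
  · simp [m2, Matrix.mul_apply, Fin.sum_univ_three, Matrix.vecHead, Matrix.vecTail]
    linarith [mul_pos h1 (mul_pos ha hd)]
  · simp [m2, Matrix.mul_apply, Fin.sum_univ_three, Matrix.vecHead, Matrix.vecTail]
    linarith [mul_pos h1 (mul_pos ha he), mul_pos h2 (mul_pos ha hf)]
  · simp [m2, Matrix.mul_apply, Fin.sum_univ_three, Matrix.vecHead, Matrix.vecTail]
    linarith [mul_pos h1 hm, mul_pos h2 (mul_pos hb hf), mul_pos h3 (mul_pos hd hf)]
  · simp [m2, Matrix.mul_apply, Fin.sum_univ_three, Matrix.vecHead, Matrix.vecTail]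
    linarith [mul_pos h4 (mul_pos ha hd)]
  · simp [m2, Matrix.mul_apply, Fin.sum_univ_three, Matrix.vecHead, Matrix.vecTail]
    linarith [mul_pos h4 (mul_pos ha he), mul_pos h5 (mul_pos ha hf)]
  · simp [m2, Matrix.mul_apply, Fin.sum_univ_three, Matrix.vecHead, Matrix.vecTail]
    linarith [mul_pos h4 hm, mul_pos h5 (mul_pos hb hf), mul_pos h6 (mul_pos hd hf)]
  · simp [m2, Matrix.mul_apply, Fin.sum_univ_three, Matrix.vecHead, Matrix.vecTail]
    linarith [mul_pos h7 (mul_pos ha hd)]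
  · simp [m2, Matrix.mul_apply, Fin.sum_univ_three, Matrix.vecHead, Matrix.vecTail]
    linarith [mul_pos h7 (mul_pos ha he), mul_pos h8 (mul_pos ha hf)]
  · simp [m2, Matrix.mul_apply, Fin.sum_univ_three, Matrix.vecHead, Matrix.vecTail]
    linarith [mul_pos h7 hm, mul_pos h8 (mul_pos hb hf), mul_pos h9 (mul_pos hd hf)]
  · rw [Matrix.det_mul, hDA]
    positivity

lemma TP3_mul_LCl {P A : Matrix (Fin 3) (Fin 3) ℝ} (hP : TP3 P) (hA : LCl A) :
    TP3 (P * A) := by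
  obtain ⟨hE, h1, h2, h3, h4, h5, h6, h7, h8, h9, hD⟩ := hP
  obtain ⟨a,b,c,d,e,f,ha,hb,hc,hd,he,hf,hm,rfl⟩ := hA
  simp only [m2] at h1 h2 h3 h4 h5 h6 h7 h8 h9 ⊢
  have hDA : ((!![a,0,0; b,c,0; d,e,f]) : Matrix (Fin 3) (Fin 3) ℝ).det = a*c*f := by
    simp [Matrix.det_fin_three, Matrix.vecHead, Matrix.vecTail]; try ring
  refine ⟨?_, ?_, ?_, ?_, ?_, ?_, ?_, ?_, ?_, ?_, ?_⟩
  · intro i j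
    fin_cases i <;> fin_cases j <;> simp [m2, Matrix.mul_apply, Fin.sum_univ_three, Matrix.vecHead, Matrix.vecTail] <;>
      linarith [mul_pos (hE 0 0) ha, mul_pos (hE 0 0) hb, mul_pos (hE 0 0) hc, mul_pos (hE 0 0) hd, mul_pos (hE 0 0) he, mul_pos (hE 0 0) hf, mul_pos (hE 0 1) ha, mul_pos (hE 0 1) hb, mul_pos (hE 0 1) hc, mul_pos (hE 0 1) hd, mul_pos (hE 0 1) he, mul_pos (hE 0 1) hf, mul_pos (hE 0 2) ha, mul_pos (hE 0 2) hb, mul_pos (hE 0 2) hc, mul_pos (hE 0 2) hd, mul_pos (hE 0 2) he, mul_pos (hE 0 2) hf, mul_pos (hE 1 0) ha, mul_pos (hE 1 0) hb, mul_pos (hE 1 0) hc, mul_pos (hE 1 0) hd, mul_pos (hE 1 0) he, mul_pos (hE 1 0) hf, mul_pos (hE 1 1) ha, mul_pos (hE 1 1) hb, mul_pos (hE 1 1) hc, mul_pos (hE 1 1) hd, mul_pos (hE 1 1) he, mul_pos (hE 1 1) hf, mul_pos (hE 1 2) ha, mul_pos (hE 1 2) hb, mul_pos (hE 1 2) hc,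 mul_pos (hE 1 2) hd, mul_pos (hE 1 2) he, mul_pos (hE 1 2) hf, mul_pos (hE 2 0) ha, mul_pos (hE 2 0) hb, mul_pos (hE 2 0) hc, mul_pos (hE 2 0) hd, mul_pos (hE 2 0) he, mul_pos (hE 2 0) hf, mul_pos (hE 2 1) ha, mul_pos (hE 2 1) hb, mul_pos (hE 2 1) hc, mul_pos (hE 2 1) hd, mul_pos (hE 2 1) he, mul_pos (hE 2 1) hf, mul_pos (hE 2 2) ha, mul_pos (hE 2 2) hb, mul_pos (hE 2 2) hc, mul_pos (hE 2 2) hd, mul_pos (hE 2 2) he, mul_pos (hE 2 2) hf]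
  · simp [m2, Matrix.mul_apply, Fin.sum_univ_three, Matrix.vecHead, Matrix.vecTail]
    linarith [mul_pos h1 (mul_pos ha hc), mul_pos h2 (mul_pos ha he), mul_pos h3 hm]
  · simp [m2, Matrix.mul_apply, Fin.sum_univ_three, Matrix.vecHead, Matrix.vecTail]
    linarith [mul_pos h2 (mul_pos ha hf), mul_pos h3 (mul_pos hb hf)]
  · simp [m2, Matrix.mul_apply, Fin.sum_univ_three, Matrix.vecHead, Matrix.vecTail]
    linarith [mul_pos h3 (mul_pos hc hf)]
  · simp [m2, Matrix.mul_apply, Fin.sum_univ_three, Matrix.vecHead, Matrix.vecTail]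
    linarith [mul_pos h4 (mul_pos ha hc), mul_pos h5 (mul_pos ha he), mul_pos h6 hm]
  · simp [m2, Matrix.mul_apply, Fin.sum_univ_three, Matrix.vecHead, Matrix.vecTail]
    linarith [mul_pos h5 (mul_pos ha hf), mul_pos h6 (mul_pos hb hf)]
  · simp [m2, Matrix.mul_apply, Fin.sum_univ_three, Matrix.vecHead, Matrix.vecTail]
    linarith [mul_pos h6 (mul_pos hc hf)]
  · simp [m2, Matrix.mul_apply, Fin.sum_univ_three, Matrix.vecHead, Matrix.vecTail]
    linarith [mul_pos h7 (mul_pos ha hc), mul_pos h8 (mul_pos ha he), mul_pos h9 hm]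
  · simp [m2, Matrix.mul_apply, Fin.sum_univ_three, Matrix.vecHead, Matrix.vecTail]
    linarith [mul_pos h8 (mul_pos ha hf), mul_pos h9 (mul_pos hb hf)]
  · simp [m2, Matrix.mul_apply, Fin.sum_univ_three, Matrix.vecHead, Matrix.vecTail]
    linarith [mul_pos h9 (mul_pos hc hf)]
  · rw [Matrix.det_mul, hDA]
    positivity

lemma ET_eq (X Z W : ℝ) :
    Emat Z W * Tmat X = !![Z⁻¹*X, Z⁻¹*(1+X), Z⁻¹; 0, 1, 1; 0, 0, W] := by
  rw [Emat, Tmat, Matrix.mul_fin_three]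
  congr 1 <;> ring_nf

lemma Tmat_inv (X : ℝ) (hX : 0 < X) :
    (Tmat X)⁻¹ = !![1, (1+X)*X⁻¹, X⁻¹; -1, -1, 0; 1, 0, 0] := by
  apply Matrix.inv_eq_right_inv
  rw [Tmat, Matrix.mul_fin_three, Matrix.one_fin_three]
  congr 1 <;> field_simp <;> ring_nf <;> simp [hX.ne']

lemma ETinv_eq (X Z W : ℝ) (hX : 0 < X) :
    Emat Z W * (Tmat X)⁻¹ = !![Z⁻¹, 0, 0; 1, 1, 0; W, W*((1+X)*X⁻¹), W*X⁻¹] := by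
  rw [Tmat_inv X hX, Emat, Matrix.mul_fin_three]
  congr 1 <;> ring_nf

lemma UCl_ET {X Z W : ℝ} (hX : 0 < X) (hZ : 0 < Z) (hW : 0 < W) :
    UCl (Emat Z W * Tmat X) := by
  rw [ET_eq]
  have hZ' : 0 < Z⁻¹ := inv_pos.2 hZ
  refine ⟨Z⁻¹*X, Z⁻¹*(1+X), Z⁻¹, 1, 1, W,
    by positivity, by nlinarith, hZ', one_pos, one_pos, hW, by nlinarith, rfl⟩

lemma LCl_ETinv {X Z W : ℝ} (hX : 0 < X) (hZ : 0 < Z) (hW : 0 < W) :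
    LCl (Emat Z W * (Tmat X)⁻¹) := by
  rw [ETinv_eq X Z W hX]
  have hZ' : 0 < Z⁻¹ := inv_pos.2 hZ
  have hX' : 0 < X⁻¹ := inv_pos.2 hX
  have key : (1:ℝ)*(W*((1+X)*X⁻¹)) - 1*W = W*X⁻¹ := by field_simp; ring
  refine ⟨Z⁻¹, 1, 1, W, W*((1+X)*X⁻¹), W*X⁻¹,
    hZ', one_pos, one_pos, hW, by nlinarith, by positivity, by
      rw [key]; positivity, rfl⟩

lemma TP3.totallyPositive {P : Matrix (Fin 3) (Fin 3) ℝ} (h : TP3 P) :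
    TotallyPositive P := by
  obtain ⟨hE, h1, h2, h3, h4, h5, h6, h7, h8, h9, hD⟩ := h
  refine ⟨hE, ?_, hD⟩
  intro r c hr hc
  have hr2 : r 0 < r 1 := hr (by decide)
  have hc2 : c 0 < c 1 := hc (by decide)
  have hdet : (P.submatrix r c).det = m2 P (r 0) (r 1) (c 0) (c 1) := by
    rw [Matrix.det_fin_two, m2]; simp
  rw [hdet]
  have hi : (r 0 = 0 ∧ r 1 = 1) ∨ (r 0 = 0 ∧ r 1 = 2) ∨ (r 0 = 1 ∧ r 1 = 2) := by omega
  have hj : (c 0 = 0 ∧ c 1 = 1) ∨ (c 0 = 0 ∧ c 1 = 2) ∨ (c 0 = 1 ∧ c 1 = 2) := by omega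
  rcases hi with ⟨e0, e1⟩ | ⟨e0, e1⟩ | ⟨e0, e1⟩ <;>
    rcases hj with ⟨f0, f1⟩ | ⟨f0, f1⟩ | ⟨f0, f1⟩ <;>
    rw [e0, e1, f0, f1] <;> assumption

lemma UCl_not_LCl {A : Matrix (Fin 3) (Fin 3) ℝ} (hU : UCl A) (hL : LCl A) : False := by
  obtain ⟨a,b,c,d,e,f,ha,hb,_,_,_,_,_,rfl⟩ := hU
  obtain ⟨a',b',c',d',e',f',_,_,_,_,_,_,_,hEq⟩ := hL
  have h01 := congrFun (congrFun hEq 0) 1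
  simp at h01
  linarith

lemma UCl.isUnit {A : Matrix (Fin 3) (Fin 3) ℝ} (h : UCl A) : IsUnit A := by
  obtain ⟨a,b,c,d,e,f,ha,hb,hc,hd,he,hf,hm,rfl⟩ := h
  rw [Matrix.isUnit_iff_isUnit_det]
  have hdet : (!![a,b,c; 0,d,e; 0,0,f] : Matrix (Fin 3) (Fin 3) ℝ).det = a*d*f := by
    simp [Matrix.det_fin_three, Matrix.vecHead, Matrix.vecTail]; try ring
  rw [hdet]
  exact isUnit_iff_ne_zero.2 (by positivity)

lemma LCl.isUnit {A : Matrix (Fin 3) (Fin 3) ℝ} (h : LCl A) : IsUnit A := by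
  obtain ⟨a,b,c,d,e,f,ha,hb,hc,hd,he,hf,hm,rfl⟩ := h
  rw [Matrix.isUnit_iff_isUnit_det]
  have hdet : (!![a,0,0; b,c,0; d,e,f] : Matrix (Fin 3) (Fin 3) ℝ).det = a*c*f := by
    simp [Matrix.det_fin_three, Matrix.vecHead, Matrix.vecTail]; try ring
  rw [hdet]
  exact isUnit_iff_ne_zero.2 (by positivity)

lemma prod_isUnit {l : List (Matrix (Fin 3) (Fin 3) ℝ)}
    (h : ∀ A ∈ l, UCl A ∨ LCl A) : IsUnit l.prod := by
  induction l with
  | nil => simp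
  | cons A t ih =>
    rw [List.prod_cons]
    exact ((h A (by simp)).elim UCl.isUnit LCl.isUnit).mul
      (ih fun B hB => h B (by simp [hB]))

lemma TP3_mul_prod {l : List (Matrix (Fin 3) (Fin 3) ℝ)}
    (h : ∀ A ∈ l, UCl A ∨ LCl A) {P : Matrix (Fin 3) (Fin 3) ℝ} (hP : TP3 P) :
    TP3 (P * l.prod) := by
  induction l generalizing P with
  | nil => simpa using hP
  | cons A t ih =>
    rw [List.prod_cons, ← mul_assoc]
    exact ih (fun B hB => h B (by simp [hB]))
      ((h A (by simp)).elim (TP3_mul_UCl hP) (TP3_mul_LCl hP))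

lemma UCl_mul_prod {l : List (Matrix (Fin 3) (Fin 3) ℝ)}
    (hcl : ∀ A ∈ l, UCl A ∨ LCl A) (hex : ∃ A ∈ l, LCl A)
    {U : Matrix (Fin 3) (Fin 3) ℝ} (hU : UCl U) : TP3 (U * l.prod) := by
  induction l generalizing U with
  | nil => simp at hex
  | cons A t ih =>
    rcases hcl A (by simp) with hA | hA
    · have hex' : ∃ B ∈ t, LCl B := by
        obtain ⟨v, hv, hLv⟩ := hex
        rcases List.mem_cons.1 hv with rfl | hv'
        · exact absurd hLv fun h => UCl_not_LCl hA hLv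
        · exact ⟨v, hv', hLv⟩
      rw [List.prod_cons, ← mul_assoc]
      exact ih (fun B hB => hcl B (by simp [hB])) hex' (UCl_mul_UCl hU hA)
    · rw [List.prod_cons, ← mul_assoc]
      exact TP3_mul_prod (fun B hB => hcl B (by simp [hB])) (UCl_mul_LCl hU hA)

end Aux

/-- Let `n ≥ 2`, let `Xᵢ, Zᵢ, Wᵢ` be positive reals and let `σ` be a choice of signs taking
both values.  Set `Mᵢ = E(Zᵢ,Wᵢ)·T(Xᵢ)` if `σ i` and `Mᵢ = E(Zᵢ,Wᵢ)·T(Xᵢ)⁻¹` otherwise.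
Then `M₀ ⋯ M_{n-1}` is conjugate in `GL₃(ℝ)` to a totally positive matrix. -/
theorem prod_conjugate_totallyPositive (n : ℕ) (hn : 2 ≤ n)
    (X Z W : Fin n → ℝ) (hX : ∀ i, 0 < X i) (hZ : ∀ i, 0 < Z i) (hW : ∀ i, 0 < W i)
    (σ : Fin n → Bool) (hσt : ∃ i, σ i = true) (hσf : ∃ i, σ i = false) :
    letI M : Fin n → Matrix (Fin 3) (Fin 3) ℝ :=
      fun i => if σ i then Emat (Z i) (W i) * Tmat (X i)
               else Emat (Z i) (W i) * (Tmat (X i))⁻¹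
    ∃ g : GL (Fin 3) ℝ,
      TotallyPositive ((g : Matrix (Fin 3) (Fin 3) ℝ) * (List.ofFn M).prod *
        ((g⁻¹ : GL (Fin 3) ℝ) : Matrix (Fin 3) (Fin 3) ℝ)) := by
  set M : Fin n → Matrix (Fin 3) (Fin 3) ℝ :=
      fun i => if σ i then Emat (Z i) (W i) * Tmat (X i)
               else Emat (Z i) (W i) * (Tmat (X i))⁻¹ with hMdef
  show ∃ g : GL (Fin 3) ℝ,
      TotallyPositive ((g : Matrix (Fin 3) (Fin 3) ℝ) * (List.ofFn M).prod *
        ((g⁻¹ : GL (Fin 3) ℝ) : Matrix (Fin 3) (Fin 3) ℝ))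
  have hMU : ∀ i, σ i = true → UCl (M i) := by
    intro i h
    rw [hMdef]
    simp only [h, if_true]
    exact UCl_ET (hX i) (hZ i) (hW i)
  have hML : ∀ i, σ i = false → LCl (M i) := by
    intro i h
    rw [hMdef]
    simp only [h, Bool.false_eq_true, if_false]
    exact LCl_ETinv (hX i) (hZ i) (hW i)
  have hcl : ∀ A ∈ List.ofFn M, UCl A ∨ LCl A := by
    intro A hA
    rw [List.mem_ofFn] at hA
    obtain ⟨i, rfl⟩ := hA
    cases hσ : σ i with
    | true => exact Or.inl (hMU i hσ)
    | false => exact Or.inr (hML i hσ)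
  obtain ⟨it, hit⟩ := hσt
  obtain ⟨jf, hjf⟩ := hσf
  have hUit : UCl (M it) := hMU it hit
  have hLjf : LCl (M jf) := hML jf hjf
  have hmem : M it ∈ List.ofFn M := List.mem_ofFn.mpr ⟨it, rfl⟩
  obtain ⟨s, t, hst⟩ := List.append_of_mem hmem
  have hts : ∀ A ∈ t ++ s, UCl A ∨ LCl A := by
    intro A hA
    apply hcl
    rw [hst]
    rw [List.mem_append] at hA
    rcases hA with h | h
    · exact List.mem_append.2 (Or.inr (List.mem_cons.2 (Or.inr h)))
    · exact List.mem_append.2 (Or.inl h)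
  have hvts : M jf ∈ t ++ s := by
    have hvmem : M jf ∈ List.ofFn M := List.mem_ofFn.mpr ⟨jf, rfl⟩
    rw [hst, List.mem_append] at hvmem
    rw [List.mem_append]
    rcases hvmem with h | h
    · exact Or.inr h
    · rcases List.mem_cons.1 h with he | h
      · exact absurd (he ▸ hLjf) fun hL => UCl_not_LCl hUit (he ▸ hLjf)
      · exact Or.inl h
  have hTP : TP3 (M it * (t ++ s).prod) := UCl_mul_prod hts ⟨M jf, hvts, hLjf⟩ hUit
  have huq : IsUnit ((M it :: t).prod) := by
    apply prod_isUnit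
    intro A hA
    apply hcl
    rw [hst]
    exact List.mem_append.2 (Or.inr hA)
  refine ⟨huq.unit, ?_⟩
  have hcoe : ((huq.unit : (Matrix (Fin 3) (Fin 3) ℝ)ˣ) : Matrix (Fin 3) (Fin 3) ℝ)
      = (M it :: t).prod := huq.unit_spec
  have hinv : ((huq.unit : (Matrix (Fin 3) (Fin 3) ℝ)ˣ) : Matrix (Fin 3) (Fin 3) ℝ) *
      ((huq.unit⁻¹ : (Matrix (Fin 3) (Fin 3) ℝ)ˣ) : Matrix (Fin 3) (Fin 3) ℝ) = 1 :=
    huq.unit.mul_inv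
  have hrw : ((huq.unit : (Matrix (Fin 3) (Fin 3) ℝ)ˣ) : Matrix (Fin 3) (Fin 3) ℝ) *
      (List.ofFn M).prod *
      ((huq.unit⁻¹ : (Matrix (Fin 3) (Fin 3) ℝ)ˣ) : Matrix (Fin 3) (Fin 3) ℝ)
      = M it * (t ++ s).prod := by
    rw [hst, List.prod_append, hcoe]
    rw [show (M it :: t).prod * (s.prod * (M it :: t).prod) = ((M it :: t).prod * s.prod) *
      (M it :: t).prod from by rw [mul_assoc]]
    have hinv2 : (M it :: t).prod * ((huq.unit⁻¹ : (Matrix (Fin 3) (Fin 3) ℝ)ˣ) :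
        Matrix (Fin 3) (Fin 3) ℝ) = 1 := huq.unit.mul_inv
    rw [mul_assoc, hinv2, mul_one]
    rw [List.prod_cons, List.prod_append, mul_assoc]
  rw [hrw]
  exact hTP.totallyPositive
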